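/- Scoring play games form a non-trivial monoid under the sequential join: the game i = {{0|0|0}|0|{0|0|0}} satisfies i ▷ G ≈ G ▷ i ≈ G for all scoring games G (so the identity set has more than one element), and the game Y = {{c|b|.}|a|.} with a ≠ 0 appropriately chosen is not invertible: there is no game Y⁻¹ with Y ▷ Y⁻¹ ▷ G ≈ G for all G. -/

import Mathlib

inductive SGame : Type where
  | mk (score : ℝ) (L R : List SGame)

namespace SGame

def score : SGame → ℝ | .mk s _ _ => s
def L : SGame → List SGame | .mk _ l _ => l
def R : SGame → List SGame | .mk _ _ r => r

mutual
  noncomputable def leftScore : SGame → ℝ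
    | .mk s l _ => WithBot.unbotD s ((l.attach.map fun x => rightScore x.1).maximum)
  termination_by g => sizeOf g
  decreasing_by
    have := List.sizeOf_lt_of_mem x.2
    simp only [SGame.mk.sizeOf_spec]
    omega
  noncomputable def rightScore : SGame → ℝ
    | .mk s _ r => WithTop.untopD s ((r.attach.map fun x => leftScore x.1).minimum)
  termination_by g => sizeOf g
  decreasing_by
    have := List.sizeOf_lt_of_mem x.2
    simp only [SGame.mk.sizeOf_spec]
    omega
end

/-- Conjunctive sum: move in all components simultaneously. -/
def conj : SGame → SGame → SGame
  | .mk s l r, .mk t l' r' =>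
    .mk (s + t)
      (l.attach.flatMap fun x => l'.attach.map fun y => conj x.1 y.1)
      (r.attach.flatMap fun x => r'.attach.map fun y => conj x.1 y.1)
termination_by G H => sizeOf G + sizeOf H
decreasing_by
  all_goals
    have h1 := List.sizeOf_lt_of_mem x.2
    have h2 := List.sizeOf_lt_of_mem y.2
    simp only [SGame.mk.sizeOf_spec]
    omega

/-- Selective sum: move in any nonempty subset of the components. -/
def sel : SGame → SGame → SGame
  | .mk s l r, .mk t l' r' =>
    .mk (s + t)
      ((l.attach.map fun x => sel x.1 (.mk t l' r')) ++
       (l'.attach.map fun y => sel (.mk s l r) y.1) ++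
       (l.attach.flatMap fun x => l'.attach.map fun y => sel x.1 y.1))
      ((r.attach.map fun x => sel x.1 (.mk t l' r')) ++
       (r'.attach.map fun y => sel (.mk s l r) y.1) ++
       (r.attach.flatMap fun x => r'.attach.map fun y => sel x.1 y.1))
termination_by G H => sizeOf G + sizeOf H
decreasing_by
  all_goals first
  | (have h1 := List.sizeOf_lt_of_mem x.2
     have h2 := List.sizeOf_lt_of_mem y.2
     simp only [SGame.mk.sizeOf_spec]; omega)
  | (have h1 := List.sizeOf_lt_of_mem x.2
     simp only [SGame.mk.sizeOf_spec]; omega)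
  | (have h2 := List.sizeOf_lt_of_mem y.2
     simp only [SGame.mk.sizeOf_spec]; omega)

/-- Add `a` points (for Left) to every score of the game. -/
def addScore (a : ℝ) : SGame → SGame
  | .mk s l r => .mk (a + s) (l.attach.map fun x => addScore a x.1)
      (r.attach.map fun x => addScore a x.1)
termination_by g => sizeOf g
decreasing_by
  all_goals
    have := List.sizeOf_lt_of_mem x.2
    simp only [SGame.mk.sizeOf_spec]; omega

/-- The negative of a game: swap the roles of Left and Right and negate all scores. -/
def neg : SGame → SGame
  | .mk s l r => .mk (-s) (r.attach.map fun x => neg x.1) (l.attach.map fun x => neg x.1)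
termination_by g => sizeOf g
decreasing_by
  all_goals
    have := List.sizeOf_lt_of_mem x.2
    simp only [SGame.mk.sizeOf_spec]; omega

/-- Impartial scoring game. -/
def Impartial : SGame → Prop
  | .mk s l r =>
    (l = [] ↔ r = []) ∧
    (∀ x ∈ l, ∃ y ∈ r, addScore (-s) x = neg (addScore (-s) y)) ∧
    (∀ x ∈ l.attach, Impartial x.1) ∧ (∀ y ∈ r.attach, Impartial y.1)
termination_by g => sizeOf g
decreasing_by
  all_goals
    first
    | (have := List.sizeOf_lt_of_mem x.2
       simp only [SGame.mk.sizeOf_spec]; omega)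
    | (have := List.sizeOf_lt_of_mem y.2
       simp only [SGame.mk.sizeOf_spec]; omega)

/-- Sequential join: play all of `G` first, then continue in `H`
    with the accumulated score. -/
def seq : SGame → SGame → SGame
  | .mk s [] [], H => addScore s H
  | .mk s l r, H =>
    .mk (s + H.score) (l.attach.map fun x => seq x.1 H)
      (r.attach.map fun x => seq x.1 H)
termination_by G _ => sizeOf G
decreasing_by
  all_goals
    have := List.sizeOf_lt_of_mem x.2
    simp only [SGame.mk.sizeOf_spec]; omega

/-- Outcome classes for scoring games. -/
inductive Outcome : Type where
  | L | R | N | P | Tie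
deriving DecidableEq

open Classical in
/-- The outcome class of a scoring game, determined by the signs of the
    optimal final scores with Left, resp. Right, moving first. -/
noncomputable def outcome (G : SGame) : Outcome :=
  if 0 < leftScore G ∧ rightScore G < 0 then .N
  else if leftScore G < 0 ∧ 0 < rightScore G then .P
  else if leftScore G = 0 ∧ rightScore G = 0 then .Tie
  else if 0 ≤ leftScore G ∧ 0 ≤ rightScore G then .L
  else .R

end SGame

namespace SGame

/-- Equivalence of scoring games in all sequential-join contexts:
same outcome whichever side of a sequential join the games appear on. -/
def SeqEquiv (A B : SGame) : Prop :=
  ∀ X : SGame, outcome (seq A X) = outcome (seq B X) ∧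
    outcome (seq X A) = outcome (seq X B)

theorem attach_map {α β : Type*} (l : List α) (f : α → β) :
    l.attach.map (fun x => f x.1) = l.map f := by
  exact List.attach_map_val

theorem leftScore_mk (s l r) : leftScore (mk s l r) = WithBot.unbotD s ((l.map rightScore).maximum) := by
  rw [leftScore, attach_map]

theorem rightScore_mk (s l r) : rightScore (mk s l r) = WithTop.untopD s ((r.map leftScore).minimum) := by
  rw [rightScore, attach_map]

theorem addScore_mk (a s l r) : addScore a (mk s l r) = mk (a + s) (l.map (addScore a)) (r.map (addScore a)) := by
  rw [addScore, attach_map, attach_map]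

theorem seq_leaf (s H) : seq (mk s [] []) H = addScore s H := by
  rw [seq]

theorem seq_mk (s l r H) (h : ¬(l = [] ∧ r = [])) :
    seq (mk s l r) H = mk (s + H.score) (l.map (seq · H)) (r.map (seq · H)) := by
  rw [seq, attach_map l (seq · H), attach_map r (seq · H)]
  exact fun h1 h2 => h ⟨h1, h2⟩


theorem score_mk (s l r) : score (mk s l r) = s := rfl

theorem score_addScore (a G) : (addScore a G).score = a + G.score := by
  cases G with | mk s l r => rw [addScore_mk]; rfl

theorem score_seq (G H) : (seq G H).score = G.score + H.score := by
  cases G with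
  | mk s l r =>
    by_cases hc : l = [] ∧ r = []
    · rw [hc.1, hc.2, seq_leaf, score_addScore]; rfl
    · rw [seq_mk _ _ _ _ hc]; rfl

/-- Custom induction principle. -/
theorem ind {P : SGame → Prop}
    (h : ∀ s l r, (∀ x ∈ l, P x) → (∀ x ∈ r, P x) → P (mk s l r)) : ∀ G, P G
  | .mk s l r => h s l r (fun x hx => ind h x) (fun x hx => ind h x)
termination_by G => sizeOf G
decreasing_by
  all_goals
    have := List.sizeOf_lt_of_mem hx
    simp only [SGame.mk.sizeOf_spec]; omega


theorem maximum_map_add (a : ℝ) (L : List ℝ) :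
    (L.map (fun x => a + x)).maximum = L.maximum.map (fun x => a + x) := by
  induction L with
  | nil => rfl
  | cons x L ih =>
    rw [List.map_cons, List.maximum_cons, List.maximum_cons, ih]
    cases h : L.maximum with
    | bot => simp
    | coe m => rw [← WithBot.coe_max x m, WithBot.map_coe, WithBot.map_coe, ← WithBot.coe_max, max_add_add_left]

theorem minimum_map_add (a : ℝ) (L : List ℝ) :
    (L.map (fun x => a + x)).minimum = L.minimum.map (fun x => a + x) := by
  induction L with
  | nil => rfl
  | cons x L ih =>
    rw [List.map_cons, List.minimum_cons, List.minimum_cons, ih]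
    cases h : L.minimum with
    | top => simp
    | coe m => rw [← WithTop.coe_min x m, WithTop.map_coe, WithTop.map_coe, ← WithTop.coe_min, min_add_add_left]

theorem unbot'_map_add (a s : ℝ) (m : WithBot ℝ) :
    WithBot.unbotD (a + s) (m.map (fun x => a + x)) = a + WithBot.unbotD s m := by
  cases m <;> rfl

theorem untop'_map_add (a s : ℝ) (m : WithTop ℝ) :
    WithTop.untopD (a + s) (m.map (fun x => a + x)) = a + WithTop.untopD s m := by
  cases m <;> rfl

theorem lr_addScore (a : ℝ) : ∀ G : SGame, (addScore a G).leftScore = a + G.leftScore ∧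
    (addScore a G).rightScore = a + G.rightScore := by
  refine ind ?_
  intro s l r ihl ihr
  rw [addScore_mk]
  constructor
  · rw [leftScore_mk, leftScore_mk, List.map_map]
    have h1 : l.map (rightScore ∘ addScore a) = (l.map rightScore).map (fun x => a + x) := by
      rw [List.map_map]
      exact List.map_congr_left fun x hx => (ihl x hx).2
    rw [h1, maximum_map_add, unbot'_map_add]
  · rw [rightScore_mk, rightScore_mk, List.map_map]
    have h1 : r.map (leftScore ∘ addScore a) = (r.map leftScore).map (fun x => a + x) := by
      rw [List.map_map]
      exact List.map_congr_left fun x hx => (ihr x hx).1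
    rw [h1, minimum_map_add, untop'_map_add]


theorem addScore_addScore (a b : ℝ) : ∀ G : SGame,
    addScore a (addScore b G) = addScore (a + b) G := by
  refine ind ?_
  intro s l r ihl ihr
  rw [addScore_mk, addScore_mk, addScore_mk, List.map_map, List.map_map, add_assoc]
  congr 1
  · exact List.map_congr_left fun x hx => ihl x hx
  · exact List.map_congr_left fun x hx => ihr x hx

theorem seq_addScore (a : ℝ) (H : SGame) : ∀ G : SGame,
    seq (addScore a G) H = addScore a (seq G H) := by
  refine ind ?_
  intro s l r ihl ihr
  by_cases hc : l = [] ∧ r = []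
  · rw [hc.1, hc.2, addScore_mk]
    simp only [List.map_nil]
    rw [seq_leaf, seq_leaf, addScore_addScore]
  · have hc' : ¬((l.map (addScore a)) = [] ∧ (r.map (addScore a)) = []) := by
      simpa using hc
    rw [addScore_mk, seq_mk _ _ _ _ hc', seq_mk _ _ _ _ hc, addScore_mk,
      List.map_map, List.map_map, List.map_map, List.map_map, add_assoc]
    congr 1
    · exact List.map_congr_left fun x hx => ihl x hx
    · exact List.map_congr_left fun x hx => ihr x hx

theorem seq_assoc (B C : SGame) : ∀ A : SGame, seq (seq A B) C = seq A (seq B C) := by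
  refine ind ?_
  intro s l r ihl ihr
  by_cases hc : l = [] ∧ r = []
  · rw [hc.1, hc.2, seq_leaf, seq_leaf, seq_addScore]
  · have hc' : ¬((l.map (seq · B)) = [] ∧ (r.map (seq · B)) = []) := by simpa using hc
    rw [seq_mk _ _ _ _ hc, seq_mk _ _ _ _ hc', seq_mk _ _ _ _ hc,
      List.map_map, List.map_map, score_seq, add_assoc]
    congr 1
    · exact List.map_congr_left fun x hx => ihl x hx
    · exact List.map_congr_left fun x hx => ihr x hx

/-- The left/right scores of `seq X H` depend on `H` only through its
score, leftScore, rightScore. -/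
theorem seq_score_congr (H1 H2 : SGame) (hs : H1.score = H2.score)
    (hl : H1.leftScore = H2.leftScore) (hr : H1.rightScore = H2.rightScore) :
    ∀ X : SGame, (seq X H1).leftScore = (seq X H2).leftScore ∧
      (seq X H1).rightScore = (seq X H2).rightScore := by
  refine ind ?_
  intro s l r ihl ihr
  by_cases hc : l = [] ∧ r = []
  · rw [hc.1, hc.2, seq_leaf, seq_leaf]
    constructor
    · rw [(lr_addScore s H1).1, (lr_addScore s H2).1, hl]
    · rw [(lr_addScore s H1).2, (lr_addScore s H2).2, hr]
  · rw [seq_mk _ _ _ _ hc, seq_mk _ _ _ _ hc]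
    constructor
    · rw [leftScore_mk, leftScore_mk, List.map_map, List.map_map, hs]
      congr 1
      exact congrArg _ (List.map_congr_left fun x hx => (ihl x hx).2)
    · rw [rightScore_mk, rightScore_mk, List.map_map, List.map_map, hs]
      congr 1
      exact congrArg _ (List.map_congr_left fun x hx => (ihr x hx).1)

/-- Sequential join with a game of trivial scores doesn't change scores. -/
theorem seq_trivial (H : SGame) (hs : H.score = 0) (hl : H.leftScore = 0)
    (hr : H.rightScore = 0) :
    ∀ G : SGame, (seq G H).leftScore = G.leftScore ∧ (seq G H).rightScore = G.rightScore := by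
  refine ind ?_
  intro s l r ihl ihr
  by_cases hc : l = [] ∧ r = []
  · rw [hc.1, hc.2, seq_leaf]
    constructor
    · rw [(lr_addScore s H).1, hl, leftScore_mk]; simp
    · rw [(lr_addScore s H).2, hr, rightScore_mk]; simp
  · rw [seq_mk _ _ _ _ hc]
    constructor
    · rw [leftScore_mk, leftScore_mk, List.map_map, hs, add_zero]
      congr 1
      exact congrArg _ (List.map_congr_left fun x hx => (ihl x hx).2)
    · rw [rightScore_mk, rightScore_mk, List.map_map, hs, add_zero]
      congr 1
      exact congrArg _ (List.map_congr_left fun x hx => (ihr x hx).1)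


noncomputable def iE : SGame := .mk 0 [.mk 0 [.mk 0 [] []] [.mk 0 [] []]]
                            [.mk 0 [.mk 0 [] []] [.mk 0 [] []]]

theorem lS_leaf (s : ℝ) : leftScore (mk s [] []) = s := by rw [leftScore_mk]; rfl
theorem rS_leaf (s : ℝ) : rightScore (mk s [] []) = s := by rw [rightScore_mk]; rfl

theorem lS_iA : leftScore (mk 0 [mk 0 [] []] [mk 0 [] []]) = 0 := by
  rw [leftScore_mk]; simp [rS_leaf]

theorem rS_iA : rightScore (mk 0 [mk 0 [] []] [mk 0 [] []]) = 0 := by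
  rw [rightScore_mk]; simp [lS_leaf]

theorem score_iE : iE.score = 0 := rfl

theorem lS_iE : iE.leftScore = 0 := by
  rw [iE, leftScore_mk]; simp [rS_iA]

theorem rS_iE : iE.rightScore = 0 := by
  rw [iE, rightScore_mk]; simp [lS_iA]

theorem lS_seq_iE (H : SGame) : (seq iE H).leftScore = H.leftScore ∧
    (seq iE H).rightScore = H.rightScore := by
  have hA : ∀ P, seq (mk 0 [mk 0 [] []] [mk 0 [] []]) P = mk (0 + P.score) [seq (mk 0 [] []) P] [seq (mk 0 [] []) P] := by
    intro P; rw [seq_mk _ _ _ _ (by simp)]; rfl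
  have h0 : ∀ P : SGame, seq (mk (0:ℝ) [] []) P = addScore 0 P := seq_leaf 0
  rw [iE, seq_mk _ _ _ _ (by simp)]
  constructor
  · rw [leftScore_mk]
    simp only [List.map_cons, List.map_nil, List.maximum_cons, List.maximum_nil, max_bot_right]
    rw [hA, rightScore_mk]
    simp only [List.map_cons, List.map_nil, List.minimum_cons, List.minimum_nil, min_top_right]
    rw [h0, (lr_addScore 0 H).1, zero_add]
    simp
  · rw [rightScore_mk]
    simp only [List.map_cons, List.map_nil, List.minimum_cons, List.minimum_nil, min_top_right]
    rw [hA, leftScore_mk]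
    simp only [List.map_cons, List.map_nil, List.maximum_cons, List.maximum_nil, max_bot_right]
    rw [h0, (lr_addScore 0 H).2, zero_add]
    simp

theorem outcome_congr {A B : SGame} (hl : A.leftScore = B.leftScore)
    (hr : A.rightScore = B.rightScore) : outcome A = outcome B := by
  unfold outcome; rw [hl, hr]



theorem outcome_tie {W : SGame} (h : outcome W = .Tie) :
    W.leftScore = 0 ∧ W.rightScore = 0 := by
  unfold outcome at h
  split_ifs at h <;> simp_all

theorem outcome_R_rS {W : SGame} (h : outcome W = .R) : W.rightScore ≤ 0 := by
  by_contra hr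
  push_neg at hr
  unfold outcome at h
  split_ifs at h with h1 h2 h3 h4
  any_goals simp at h
  have hls : ¬ 0 ≤ W.leftScore := fun hl => h4 ⟨hl, hr.le⟩
  exact h2 ⟨not_le.1 hls, hr⟩

theorem outcome_addScore_zero (W : SGame) : outcome (addScore 0 W) = outcome W :=
  outcome_congr ((lr_addScore 0 W).1.trans (zero_add _))
    ((lr_addScore 0 W).2.trans (zero_add _))

theorem outcome_leaf_zero : outcome (mk (0:ℝ) [] []) = .Tie := by
  unfold outcome; rw [lS_leaf, rS_leaf]; simp

/-- Scoring games form a non-trivial monoid under the sequential join: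
`i = {{0|0|0}|0|{0|0|0}}` is an identity (so the identity set has more than one
element), while the game `Y = {{c|b|.}|a|.}` (for suitable `a ≠ 0`) has no inverse. -/
theorem seq_nontrivial_monoid :
    (∀ G : SGame,
      let i : SGame := .mk 0 [.mk 0 [.mk 0 [] []] [.mk 0 [] []]]
                            [.mk 0 [.mk 0 [] []] [.mk 0 [] []]]
      SeqEquiv (seq i G) G ∧ SeqEquiv (seq G i) G) ∧
    (∃ a b c : ℝ, a ≠ 0 ∧
      ¬ ∃ Yinv : SGame, ∀ G : SGame,
        SeqEquiv (seq (seq (SGame.mk a [SGame.mk b [SGame.mk c [] []] []] []) Yinv) G) G) := by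
  constructor
  · intro G
    intro i
    show SeqEquiv (seq iE G) G ∧ SeqEquiv (seq G iE) G
    refine ⟨fun X => ⟨?_, ?_⟩, fun X => ⟨?_, ?_⟩⟩
    · rw [seq_assoc]
      exact outcome_congr (lS_seq_iE _).1 (lS_seq_iE _).2
    · have h := seq_score_congr (seq iE G) G
        (by rw [score_seq, score_iE, zero_add]) (lS_seq_iE G).1 (lS_seq_iE G).2 X
      exact outcome_congr h.1 h.2
    · rw [seq_assoc]
      have h := seq_score_congr (seq iE X) X
        (by rw [score_seq, score_iE, zero_add]) (lS_seq_iE X).1 (lS_seq_iE X).2 G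
      exact outcome_congr h.1 h.2
    · have ht := seq_trivial iE score_iE lS_iE rS_iE G
      have h := seq_score_congr (seq G iE) G
        (by rw [score_seq, score_iE, add_zero]) ht.1 ht.2 X
      exact outcome_congr h.1 h.2
  · refine ⟨1, 0, 0, one_ne_zero, ?_⟩
    rintro ⟨Yinv, hY⟩
    set Y : SGame := mk 1 [mk 0 [mk 0 [] []] []] [] with hYdef
    have hZ : seq Y Yinv = mk (1 + Yinv.score) [seq (mk 0 [mk 0 [] []] []) Yinv] [] := by
      rw [hYdef, seq_mk _ _ _ _ (by simp)]
      simp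
    have hrSZ : ∀ G : SGame, (seq (seq Y Yinv) G).rightScore = (1 + Yinv.score) + G.score := by
      intro G
      rw [hZ, seq_mk _ _ _ _ (by simp), rightScore_mk]
      simp [score_mk]
    have hout : ∀ G : SGame, outcome (seq (seq Y Yinv) G) = outcome G := by
      intro G
      have h := (hY G (mk 0 [] [])).2
      rw [seq_leaf, seq_leaf, outcome_addScore_zero, outcome_addScore_zero] at h
      exact h
    have ht : 1 + Yinv.score = 0 := by
      have h1 := outcome_tie ((hout (mk 0 [] [])).trans outcome_leaf_zero)
      have h2 := hrSZ (mk 0 [] [])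
      rw [h1.2, score_mk] at h2
      linarith
    set G1 : SGame := mk 1 [mk (-1) [] []] [mk (-1) [] []] with hG1def
    have hlG1 : G1.leftScore = -1 := by
      rw [hG1def, leftScore_mk]
      simp only [List.map_cons, List.map_nil, rS_leaf, List.maximum_cons,
        List.maximum_nil, max_bot_right]
      rw [WithBot.unbotD_coe]
    have hrG1 : G1.rightScore = -1 := by
      rw [hG1def, rightScore_mk]
      simp only [List.map_cons, List.map_nil, lS_leaf, List.minimum_cons,
        List.minimum_nil, min_top_right]
      rw [WithTop.untopD_coe]
    have houtG1 : outcome G1 = .R := by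
      unfold outcome; rw [hlG1, hrG1]; norm_num
    have hle := outcome_R_rS ((hout G1).trans houtG1)
    rw [hrSZ G1, hG1def, score_mk] at hle
    linarith

end SGame
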